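/- Let A, B ∈ ℝ^{d×n}, let P be the random projection operator P(A) = Σ_{(i,u)∈S} u uᵀ A eᵢ eᵢᵀ built from a random set S with per-index orthonormal directions, and let ω be a {0,1}-valued random variable such that E[ω P(A)] = σ A for all A, where σ ∈ (0,1). Then E[‖A − ω P(A − B)‖_F²] = (1 − σ)‖A‖_F² + σ‖B‖_F². -/

import Mathlib

open Finset MeasureTheory

variable {d n : ℕ}

/-- The projection operator `P(A) = Σ_{(i,u)∈S} u uᵀ A eᵢ eᵢᵀ`. -/
def Pop (S : Finset (Fin n × (Fin d → ℝ)))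
    (A : Matrix (Fin d) (Fin n) ℝ) : Matrix (Fin d) (Fin n) ℝ :=
  ∑ p ∈ S, Matrix.of fun j i => if i = p.1 then p.2 j * ∑ l, p.2 l * A l p.1 else 0

/-- For each fixed index `i`, the directions paired with `i` in `S` are orthonormal. -/
def PerIndexOrthonormal (S : Finset (Fin n × (Fin d → ℝ))) : Prop :=
  (∀ p ∈ S, ∑ l, p.2 l * p.2 l = 1) ∧
    ∀ p ∈ S, ∀ q ∈ S, p.1 = q.1 → p.2 ≠ q.2 → ∑ l, p.2 l * q.2 l = 0

/-- Squared Frobenius norm. -/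
def frobSq (A : Matrix (Fin d) (Fin n) ℝ) : ℝ := ∑ j, ∑ i, A j i ^ 2

lemma Pop_apply (S : Finset (Fin n × (Fin d → ℝ))) (X : Matrix (Fin d) (Fin n) ℝ)
    (j : Fin d) (i : Fin n) :
    Pop S X j i = ∑ p ∈ S.filter (fun p => p.1 = i),
      p.2 j * ∑ l, p.2 l * X l i := by
  simp only [Pop, Matrix.sum_apply, Matrix.of_apply, Finset.sum_filter]
  refine Finset.sum_congr rfl fun p _ => ?_
  rcases eq_or_ne p.1 i with h | h
  · subst h; simp
  · simp [h, Ne.symm h]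

lemma key (S : Finset (Fin n × (Fin d → ℝ))) (h : PerIndexOrthonormal S)
    (X : Matrix (Fin d) (Fin n) ℝ) :
    frobSq (Pop S X) = ∑ j, ∑ i, Pop S X j i * X j i := by
  unfold frobSq
  rw [Finset.sum_comm]
  conv_rhs => rw [Finset.sum_comm]
  refine Finset.sum_congr rfl fun i _ => ?_
  set T := S.filter (fun p => p.1 = i) with hT
  set c : Fin n × (Fin d → ℝ) → ℝ := fun p => ∑ l, p.2 l * X l i with hc
  have hPop : ∀ j, Pop S X j i = ∑ p ∈ T, p.2 j * c p := fun j => Pop_apply S X j i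
  have horthT : ∀ p ∈ T, ∀ q ∈ T, ∑ j, p.2 j * q.2 j = if p = q then 1 else 0 := by
    intro p hp q hq
    simp only [hT, Finset.mem_filter] at hp hq
    rcases eq_or_ne p q with rfl | hpq
    · simp [h.1 p hp.1]
    · rw [if_neg hpq]
      have hpq2 : p.2 ≠ q.2 := by
        intro h2
        exact hpq (Prod.ext (hp.2.trans hq.2.symm) h2)
      exact h.2 p hp.1 q hq.1 (hp.2.trans hq.2.symm) hpq2
  calc ∑ j, Pop S X j i ^ 2
      = ∑ p ∈ T, ∑ q ∈ T, (c p * c q) * ∑ j, p.2 j * q.2 j := by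
        simp only [hPop, sq, Finset.sum_mul_sum]
        rw [Finset.sum_comm]
        refine Finset.sum_congr rfl fun p _ => ?_
        rw [Finset.sum_comm]
        refine Finset.sum_congr rfl fun q _ => ?_
        rw [Finset.mul_sum]
        exact Finset.sum_congr rfl fun j _ => by ring
    _ = ∑ p ∈ T, c p * c p := by
        refine Finset.sum_congr rfl fun p hp => ?_
        rw [Finset.sum_eq_single p]
        · rw [horthT p hp p hp, if_pos rfl, mul_one]
        · intro q hq hqp
          rw [horthT p hp q hq, if_neg (Ne.symm hqp), mul_zero]
        · intro hps; exact absurd hp hps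
    _ = ∑ j, Pop S X j i * X j i := by
        simp only [hPop, Finset.sum_mul]
        rw [Finset.sum_comm]
        refine Finset.sum_congr rfl fun p hp => ?_
        have hci : c p = ∑ j, p.2 j * X j i := rfl
        rw [hci]
        rw [Finset.mul_sum]
        exact Finset.sum_congr rfl fun j _ => by ring

/-- If `ω ∈ {0,1}` and `E[ω P(X)] = σ X` for all `X`, then
`E[‖A − ω P(A − B)‖_F²] = (1−σ)‖A‖_F² + σ‖B‖_F²`. -/
theorem stmt10 {Ω : Type*} [MeasurableSpace Ω] (μ : Measure Ω) [IsProbabilityMeasure μ]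
    (S : Ω → Finset (Fin n × (Fin d → ℝ))) (w : Ω → ℝ)
    (hw01 : ∀ ω, w ω = 0 ∨ w ω = 1)
    (horth : ∀ ω, PerIndexOrthonormal (S ω))
    (σ : ℝ) (hσ : 0 < σ) (hσ1 : σ < 1)
    (hint : ∀ (X : Matrix (Fin d) (Fin n) ℝ) (j : Fin d) (i : Fin n),
      Integrable (fun ω => w ω * Pop (S ω) X j i) μ)
    (hmean : ∀ (X : Matrix (Fin d) (Fin n) ℝ) (j : Fin d) (i : Fin n),
      ∫ ω, w ω * Pop (S ω) X j i ∂μ = σ * X j i)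
    (A B : Matrix (Fin d) (Fin n) ℝ) :
    ∫ ω, frobSq (A - w ω • Pop (S ω) (A - B)) ∂μ =
      (1 - σ) * frobSq A + σ * frobSq B := by
  set X := A - B with hX
  have hpt : ∀ ω, frobSq (A - w ω • Pop (S ω) X) =
      frobSq A + ∑ j, ∑ i, (w ω * Pop (S ω) X j i) * (X j i - 2 * A j i) := by
    intro ω
    have hw2 : w ω * w ω = w ω := by rcases hw01 ω with h | h <;> rw [h] <;> ring
    have hk := key (S ω) (horth ω) X
    unfold frobSq at hk ⊢
    have expand : ∀ j i, (A - w ω • Pop (S ω) X) j i ^ 2 =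
        A j i ^ 2 - 2 * A j i * (w ω * Pop (S ω) X j i)
          + (w ω * w ω) * (Pop (S ω) X j i ^ 2) := by
      intro j i
      simp only [Matrix.sub_apply, Matrix.smul_apply, smul_eq_mul]
      ring
    simp only [expand, Finset.sum_add_distrib, Finset.sum_sub_distrib, hw2]
    rw [show (∑ j, ∑ i, w ω * Pop (S ω) X j i ^ 2) =
      w ω * ∑ j, ∑ i, Pop (S ω) X j i * X j i from by rw [← hk]; simp [Finset.mul_sum]]
    rw [sub_add_eq_add_sub, add_sub_assoc]
    congr 1
    simp only [Finset.mul_sum, ← Finset.sum_sub_distrib]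
    exact Finset.sum_congr rfl fun j _ => Finset.sum_congr rfl fun i _ => by ring
  simp only [hpt]
  have hint2 : Integrable (fun ω => ∑ j, ∑ i,
      (w ω * Pop (S ω) X j i) * (X j i - 2 * A j i)) μ := by
    apply integrable_finset_sum
    intro j _
    apply integrable_finset_sum
    intro i _
    exact (hint X j i).mul_const _
  rw [integral_add (integrable_const _) hint2, integral_const]
  simp only [measure_univ, probReal_univ, ENNReal.toReal_one, smul_eq_mul, one_mul]
  rw [integral_finset_sum _ (fun j _ => integrable_finset_sum _
    (fun i _ => (hint X j i).mul_const _))]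
  have : ∀ j : Fin d, (∫ ω, ∑ i, (w ω * Pop (S ω) X j i) * (X j i - 2 * A j i) ∂μ)
      = ∑ i, σ * X j i * (X j i - 2 * A j i) := by
    intro j
    rw [integral_finset_sum _ (fun i _ => (hint X j i).mul_const _)]
    exact Finset.sum_congr rfl fun i _ => by rw [integral_mul_const, hmean X j i]
  simp only [this]
  have hterm : ∀ j i, σ * X j i * (X j i - 2 * A j i) = σ * B j i ^ 2 - σ * A j i ^ 2 := by
    intro j i
    simp only [hX, Matrix.sub_apply]
    ring
  simp only [hterm, Finset.sum_sub_distrib, ← Finset.mul_sum]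
  unfold frobSq
  ring
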